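/- Let V be a module over HV⊗B, and suppose J is an ideal of B and W a subspace of V such that (Vir⊗J)·W = 0. If R₁ and R₋₁ are ideals of B with (I_1⊗R₁)·W = 0 and (I_{-1}⊗R_{-1})·W = 0, then (I_{j+1}⊗(J·R₁))·W = 0 for all j ≥ 0 and (I_{j-1}⊗(J·R_{-1}))·W = 0 for all j ≤ 0; consequently (I_j⊗J²R₁R_{-1})·W = 0 for all j ≠ 0. -/

import Mathlib

/-- Let `V` be a module over `HV ⊗ B` with `actd n a`, `actI n a`, `actC a`,
`actCD a` the actions of `d_n ⊗ a`, `I_n ⊗ a`, `C ⊗ a`, `C_D ⊗ a`, satisfying the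
bracket `[d_n ⊗ a, I_m ⊗ c] = m · I_{m+n} ⊗ ac + δ_{n,-m}(n²+n) C_D ⊗ ac`.
Suppose `(Vir ⊗ J) · W = 0`, `(I_1 ⊗ R₁) · W = 0` and `(I_{-1} ⊗ R_{-1}) · W = 0`.
Then `(I_{j+1} ⊗ J·R₁) · W = 0` for all `j ≥ 0`, `(I_{j-1} ⊗ J·R_{-1}) · W = 0`
for all `j ≤ 0`, and consequently `(I_j ⊗ J²R₁R_{-1}) · W = 0` for all `j ≠ 0`. -/
theorem stmt6 {B V : Type*} [CommRing B] [Algebra ℂ B]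
    [AddCommGroup V] [Module ℂ V]
    (actd actI : ℤ → B → Module.End ℂ V) (actC actCD : B → Module.End ℂ V)
    (hIlin : ∀ n : ℤ, IsLinearMap ℂ (actI n))
    (hbr : ∀ (n m : ℤ) (a c : B),
      actd n a * actI m c - actI m c * actd n a
        = (m : ℂ) • actI (m + n) (a * c)
          + (if n = -m then ((n ^ 2 + n : ℤ) : ℂ) • actCD (a * c) else 0))
    (J R1 Rm1 : Ideal B) (W : Submodule ℂ V)
    (hVJ : ∀ a ∈ J, ∀ n : ℤ, ∀ w ∈ W, actd n a w = 0)
    (hCJ : ∀ a ∈ J, ∀ w ∈ W, actC a w = 0)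
    (hR1 : ∀ r ∈ R1, ∀ w ∈ W, actI 1 r w = 0)
    (hRm1 : ∀ r ∈ Rm1, ∀ w ∈ W, actI (-1) r w = 0) :
    (∀ j : ℤ, 0 ≤ j → ∀ a ∈ J, ∀ r ∈ R1, ∀ w ∈ W, actI (j + 1) (a * r) w = 0) ∧
    (∀ j : ℤ, j ≤ 0 → ∀ a ∈ J, ∀ r ∈ Rm1, ∀ w ∈ W, actI (j - 1) (a * r) w = 0) ∧
    (∀ j : ℤ, j ≠ 0 → ∀ x ∈ J * J * R1 * Rm1, ∀ w ∈ W, actI j x w = 0) := by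
  have key1 : ∀ j : ℤ, j ≠ -1 → ∀ a ∈ J, ∀ r ∈ R1, ∀ w ∈ W,
      actI (j + 1) (a * r) w = 0 := by
    intro j hj a ha r hr w hw
    have h := LinearMap.congr_fun (hbr j 1 a r) w
    rw [if_neg (by omega : ¬ j = -(1:ℤ))] at h
    have hL : (actd j a * actI 1 r - actI 1 r * actd j a) w = 0 := by
      simp [LinearMap.sub_apply, Module.End.mul_apply, hVJ a ha j w hw,
        hR1 r hr w hw]
    rw [h] at hL
    simp only [LinearMap.add_apply, LinearMap.smul_apply, LinearMap.zero_apply,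
      add_zero, Int.cast_one, one_smul] at hL
    rw [show j + 1 = 1 + j by ring]
    exact hL
  have key2 : ∀ j : ℤ, j ≠ 1 → ∀ a ∈ J, ∀ r ∈ Rm1, ∀ w ∈ W,
      actI (j - 1) (a * r) w = 0 := by
    intro j hj a ha r hr w hw
    have h := LinearMap.congr_fun (hbr j (-1) a r) w
    rw [if_neg (by omega : ¬ j = -(-1:ℤ))] at h
    have hL : (actd j a * actI (-1) r - actI (-1) r * actd j a) w = 0 := by
      simp [LinearMap.sub_apply, Module.End.mul_apply, hVJ a ha j w hw,
        hRm1 r hr w hw]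
    rw [h] at hL
    simp only [LinearMap.add_apply, LinearMap.smul_apply, LinearMap.zero_apply,
      add_zero, Int.cast_neg, Int.cast_one, neg_smul, one_smul,
      LinearMap.neg_apply, neg_eq_zero] at hL
    rw [show j - 1 = -1 + j by ring]
    exact hL
  refine ⟨fun j hj => key1 j (by omega), fun j hj => key2 j (by omega), ?_⟩
  intro j hj x hx w hw
  rcases lt_or_gt_of_ne hj with hneg | hpos
  · have hle : J * J * R1 * Rm1 ≤ J * Rm1 :=
      Ideal.mul_mono (le_trans Ideal.mul_le_left Ideal.mul_le_left) le_rfl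
    refine Submodule.mul_induction_on (hle hx) ?_ ?_
    · intro a ha r hr
      have := key2 (j + 1) (by omega) a ha r hr w hw
      simpa using this
    · intro y z hy hz
      rw [(hIlin j).map_add, LinearMap.add_apply, hy, hz, add_zero]
  · have hle : J * J * R1 * Rm1 ≤ J * R1 :=
      le_trans Ideal.mul_le_left (Ideal.mul_mono Ideal.mul_le_left le_rfl)
    refine Submodule.mul_induction_on (hle hx) ?_ ?_
    · intro a ha r hr
      have := key1 (j - 1) (by omega) a ha r hr w hw
      simpa using this
    · intro y z hy hz
      rw [(hIlin j).map_add, LinearMap.add_apply, hy, hz, add_zero]
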